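/- Let E and F be orthogonal projections on a Hilbert space H with F ∧ (I − E) = 0 (i.e., the ranges of F and I−E intersect only in 0). Then F is Murray–von Neumann subequivalent to E in B(H); equivalently, there is a partial isometry V ∈ B(H) with V*V = F and VV* ≤ E. In particular, if E has finite rank then F has finite rank with rank F ≤ rank E. -/

import Mathlib

open ContinuousLinearMap

noncomputable section Aux

variable {H : Type*} [NormedAddCommGroup H] [InnerProductSpace ℂ H] [CompleteSpace H]

local notation "⟪" x ", " y "⟫" => @inner ℂ _ _ x y

set_option linter.unusedSectionVars false in
lemma aux_mem_range_iff {E : H →L[ℂ] H} (hE1 : IsIdempotentElem E) (x : H) :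
    x ∈ LinearMap.range (E : H →ₗ[ℂ] H) ↔ E x = x := by
  constructor
  · rintro ⟨y, rfl⟩
    conv_rhs => rw [← hE1]
    rfl
  · intro hx; exact ⟨x, hx⟩

lemma aux_isClosed_range {E : H →L[ℂ] H} (hE1 : IsIdempotentElem E) :
    IsClosed ((LinearMap.range (E : H →ₗ[ℂ] H) : Submodule ℂ H) : Set H) := by
  have : ((LinearMap.range (E : H →ₗ[ℂ] H) : Submodule ℂ H) : Set H) = {x | E x = x} :=
    Set.ext fun x => aux_mem_range_iff hE1 x
  rw [this]
  exact isClosed_eq E.continuous continuous_id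

lemma aux_proj_eq {F : H →L[ℂ] H} (hF1 : IsIdempotentElem F) (hF2 : IsSelfAdjoint F)
    [CompleteSpace ↥(LinearMap.range (F : H →ₗ[ℂ] H))] (x : H) :
    (Submodule.orthogonalProjection (LinearMap.range (F : H →ₗ[ℂ] H)) x : H) = F x := by
  have hadj : adjoint F = F := hF2
  refine Submodule.eq_starProjection_of_mem_of_inner_eq_zero ⟨x, rfl⟩ ?_
  rintro _ ⟨y, rfl⟩
  have : F (x - F x) = 0 := by
    have h2 : F (F x) = F x := by
      conv_rhs => rw [← hF1]
      rfl
    simp [map_sub, h2]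
  calc ⟪x - F x, F y⟫ = ⟪adjoint F (x - F x), y⟫ := (adjoint_inner_left F y (x - F x)).symm
    _ = 0 := by rw [hadj, this, inner_zero_left]

variable {E F : H →L[ℂ] H}

set_option maxHeartbeats 1000000 in
theorem main (hE1 : IsIdempotentElem E) (hE2 : IsSelfAdjoint E)
    (hF1 : IsIdempotentElem F) (hF2 : IsSelfAdjoint F)
    (h : LinearMap.range (F : H →ₗ[ℂ] H) ⊓ LinearMap.range ((1 - E : H →L[ℂ] H) : H →ₗ[ℂ] H) = ⊥) :
    ∃ V : H →L[ℂ] H, adjoint V * V = F ∧ IsIdempotentElem (V * adjoint V) ∧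
        LinearMap.range ((V * adjoint V : H →L[ℂ] H) : H →ₗ[ℂ] H) ≤ LinearMap.range (E : H →ₗ[ℂ] H) := by
  classical
  set T : H →L[ℂ] H := E * F with hTdef
  set A : H →L[ℂ] H := adjoint T * T with hAdef
  have hA : 0 ≤ A := by
    simpa [hAdef, star_eq_adjoint] using star_mul_self_nonneg T
  set S : H →L[ℂ] H := CFC.sqrt A with hSdef
  have hSnn : 0 ≤ S := CFC.sqrt_nonneg (a := A)
  have hSsa : adjoint S = S := IsSelfAdjoint.of_nonneg hSnn
  have hSS : S * S = A := by
    have := CFC.sq_sqrt A hA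
    rwa [sq] at this
  -- the key norm identity
  have hinner : ∀ x : H, ⟪S x, S x⟫ = ⟪T x, T x⟫ := by
    intro x
    have h1 : ⟪S x, S x⟫ = ⟪x, A x⟫ := by
      rw [← hSsa, adjoint_inner_left, hSsa]
      congr 1
      rw [← hSS]; rfl
    have h2 : ⟪T x, T x⟫ = ⟪x, A x⟫ := (adjoint_inner_right T x (T x)).symm
    rw [h1, h2]
  have hnorm : ∀ x : H, ‖S x‖ = ‖T x‖ := by
    intro x
    rw [@norm_eq_sqrt_re_inner ℂ, @norm_eq_sqrt_re_inner ℂ, hinner]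
  -- kernels
  have hTker : ∀ x : H, T x = 0 ↔ F x = 0 := by
    intro x
    constructor
    · intro hx
      have h1 : F x ∈ LinearMap.range (F : H →ₗ[ℂ] H) := ⟨x, rfl⟩
      have h2 : F x ∈ LinearMap.range ((1 - E : H →L[ℂ] H) : H →ₗ[ℂ] H) := by
        refine ⟨F x, ?_⟩
        have : E (F x) = 0 := hx
        simp [sub_apply, one_apply, this]
      have : F x ∈ LinearMap.range (F : H →ₗ[ℂ] H) ⊓ LinearMap.range ((1 - E : H →L[ℂ] H) : H →ₗ[ℂ] H) := ⟨h1, h2⟩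
      rw [h] at this
      simpa using this
    · intro hx
      show E (F x) = 0
      rw [hx, map_zero]
  have hSker : ∀ x : H, S x = 0 ↔ F x = 0 := by
    intro x
    rw [← hTker x, ← norm_eq_zero (a := S x), hnorm, norm_eq_zero]
  have hFF : ∀ z : H, F (F z) = F z := by
    intro z
    conv_rhs => rw [← hF1]
    rfl
  have hFadj : adjoint F = F := hF2
  have hsym : ∀ a b : H, ⟪F a, b⟫ = ⟪a, F b⟫ := by
    intro a b
    conv_lhs => rw [← hFadj]
    exact adjoint_inner_left F b a
  have hsymS : ∀ a b : H, ⟪S a, b⟫ = ⟪a, S b⟫ := by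
    intro a b
    conv_lhs => rw [← hSsa]
    exact adjoint_inner_left S b a
  set M : Submodule ℂ H := LinearMap.range (F : H →ₗ[ℂ] H) with hMdef
  have hMclosed : IsClosed (M : Set H) := aux_isClosed_range hF1
  haveI : CompleteSpace M := hMclosed.completeSpace_coe
  -- range S ≤ M
  have hSM : LinearMap.range (S : H →ₗ[ℂ] H) ≤ M := by
    rintro _ ⟨x, rfl⟩
    rw [← Submodule.orthogonal_orthogonal M]
    intro w hw
    have hw' : ∀ u ∈ M, ⟪u, w⟫ = 0 := (Submodule.mem_orthogonal M w).mp hw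
    have hFw : F w = 0 := by
      have h1 : ⟪F w, F w⟫ = 0 := by
        rw [hsym w (F w), inner_eq_zero_symm]
        exact hw' _ ⟨F w, rfl⟩
      exact inner_self_eq_zero.mp h1
    have hSw : S w = 0 := by
      have : ‖S w‖ = 0 := by
        rw [hnorm]
        show ‖E (F w)‖ = 0
        rw [hFw, map_zero, norm_zero]
      simpa using this
    have := hsymS w x
    rw [hSw, inner_zero_left] at this
    exact this.symm
  set N : Submodule ℂ H := (LinearMap.range (S : H →ₗ[ℂ] H)).topologicalClosure with hNdef
  have hNM : N ≤ M := Submodule.topologicalClosure_minimal _ hSM hMclosed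
  have hMN : M ≤ N := by
    intro m hm
    haveI : CompleteSpace N := (Submodule.isClosed_topologicalClosure _).completeSpace_coe
    set a : H := (Submodule.orthogonalProjection N m : H) with hadef
    have haN : a ∈ N := (Submodule.orthogonalProjection N m).2
    have hb : m - a ∈ Nᗮ := Submodule.sub_starProjection_mem_orthogonal m
    have hb' : ∀ u ∈ N, ⟪u, m - a⟫ = 0 := (Submodule.mem_orthogonal N _).mp hb
    have hSb : S (m - a) = 0 := by
      have h1 : ⟪S (S (m - a)), m - a⟫ = 0 := by
        refine hb' _ (Submodule.le_topologicalClosure _ ⟨S (m - a), rfl⟩)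
      rw [hsymS] at h1
      exact inner_self_eq_zero.mp h1
    have hFb : F (m - a) = 0 := (hSker _).mp hSb
    have hFm : F m = m := (aux_mem_range_iff hF1 m).mp hm
    have hFa : F a = a := (aux_mem_range_iff hF1 a).mp (hNM haN)
    have : m - a = 0 := by
      rw [map_sub, hFm, hFa] at hFb
      exact hFb
    have hma : m = a := by rwa [sub_eq_zero] at this
    rw [hma]
    exact haN
  have hMeqN : M = N := le_antisymm hMN hNM
  -- the quotient construction of the isometry on range S
  set Sl : H →ₗ[ℂ] H := (S : H →ₗ[ℂ] H) with hSldef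
  set Tl : H →ₗ[ℂ] H := (T : H →ₗ[ℂ] H) with hTldef
  have hrangeSl : LinearMap.range Sl = LinearMap.range (S : H →ₗ[ℂ] H) := rfl
  have hkerle : LinearMap.ker Sl ≤ LinearMap.ker Tl := by
    intro x hx
    have hsx : S x = 0 := hx
    have : F x = 0 := (hSker x).mp hsx
    show T x = 0
    exact (hTker x).mpr this
  set Tbar : (H ⧸ LinearMap.ker Sl) →ₗ[ℂ] H := (LinearMap.ker Sl).liftQ Tl hkerle with hTbardef
  set eS : (H ⧸ LinearMap.ker Sl) ≃ₗ[ℂ] LinearMap.range Sl := Sl.quotKerEquivRange with heSdef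
  set f0 : ↥(LinearMap.range Sl) →ₗ[ℂ] H := Tbar ∘ₗ (eS.symm : ↥(LinearMap.range Sl) →ₗ[ℂ] (H ⧸ LinearMap.ker Sl)) with hf0def
  have hf0 : ∀ (x : H) (hx : Sl x ∈ LinearMap.range Sl), f0 ⟨Sl x, hx⟩ = T x := by
    intro x hx
    show Tbar (eS.symm ⟨Sl x, hx⟩) = T x
    rw [heSdef, LinearMap.quotKerEquivRange_symm_apply_image]
    simp [hTbardef, Submodule.liftQ_apply]
    rfl
  have hf0norm : ∀ y : ↥(LinearMap.range Sl), ‖f0 y‖ = ‖y‖ := by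
    rintro ⟨-, ⟨x, rfl⟩⟩
    rw [hf0 x ⟨x, rfl⟩]
    show ‖T x‖ = ‖Sl x‖
    exact (hnorm x).symm
  set fI : ↥(LinearMap.range Sl) →ₗᵢ[ℂ] H := ⟨f0, hf0norm⟩ with hfIdef
  have hle : LinearMap.range Sl ≤ M := hrangeSl ▸ hSM
  set eI : ↥(LinearMap.range Sl) →ₗᵢ[ℂ] ↥M := ⟨Submodule.inclusion hle, fun y => rfl⟩ with heIdef
  set e : ↥(LinearMap.range Sl) →L[ℂ] ↥M := eI.toContinuousLinearMap with hedef
  have h_dense : DenseRange e := by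
    intro m
    have hmN : (m : H) ∈ N := hMeqN ▸ m.2
    have hcl : (m : H) ∈ closure ((LinearMap.range Sl : Submodule ℂ H) : Set H) := by
      rw [hrangeSl, ← Submodule.topologicalClosure_coe (LinearMap.range (S : H →ₗ[ℂ] H))]
      exact hmN
    have himg : (Subtype.val '' Set.range e) = ((LinearMap.range Sl : Submodule ℂ H) : Set H) := by
      ext z
      constructor
      · rintro ⟨y, ⟨a, rfl⟩, rfl⟩
        exact a.2
      · intro hz
        exact ⟨e ⟨z, hz⟩, ⟨⟨z, hz⟩, rfl⟩, rfl⟩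
    rw [closure_subtype, himg]
    exact hcl
  have h_ui : IsUniformInducing e := eI.isometry.isUniformInducing
  set g : ↥M →L[ℂ] H := fI.toContinuousLinearMap.extend e with hgdef
  have hge : ∀ y : ↥(LinearMap.range Sl), g (e y) = f0 y := by
    intro y
    exact ContinuousLinearMap.extend_eq (h_dense := h_dense) (h_e := h_ui) ..
  have hgnorm : ∀ y : ↥M, ‖g y‖ = ‖y‖ := by
    intro y
    refine h_dense.induction_on y (isClosed_eq g.continuous.norm continuous_norm) ?_
    intro a
    rw [hge a]
    rw [hf0norm a]
    rfl
  set gI : ↥M →ₗᵢ[ℂ] H := ⟨(g : ↥M →ₗ[ℂ] H), hgnorm⟩ with hgIdef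
  set P : H →L[ℂ] ↥M := Submodule.orthogonalProjection M with hPdef
  have hP : ∀ x : H, ((P x : H)) = F x := fun x => aux_proj_eq hF1 hF2 x
  set V : H →L[ℂ] H := g ∘L P with hVdef
  have hVapp : ∀ x : H, V x = g (P x) := fun x => rfl
  have claim1 : adjoint V * V = F := by
    ext x
    refine ext_inner_right ℂ fun y => ?_
    have hL : ⟪(adjoint V * V) x, y⟫ = ⟪V x, V y⟫ := by
      rw [ContinuousLinearMap.mul_apply]
      exact adjoint_inner_left V y (V x)
    rw [hL]
    calc ⟪V x, V y⟫ = ⟪(P x : H), (P y : H)⟫ := by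
          rw [← Submodule.coe_inner]
          exact gI.inner_map_map (P x) (P y)
      _ = ⟪F x, F y⟫ := by rw [hP, hP]
      _ = ⟪x, F (F y)⟫ := hsym x (F y)
      _ = ⟪x, F y⟫ := by rw [hFF]
      _ = ⟪F x, y⟫ := (hsym x y).symm
  have hPF : ∀ x : H, P (F x) = P x := by
    intro x
    apply Subtype.ext
    rw [hP, hP, hFF]
  have hVF : V * F = V := by
    ext x
    show g (P (F x)) = g (P x)
    rw [hPF]
  have claim2 : IsIdempotentElem (V * adjoint V) := by
    show V * adjoint V * (V * adjoint V) = V * adjoint V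
    have hassoc : V * adjoint V * (V * adjoint V) = V * (adjoint V * V) * adjoint V := by
      noncomm_ring
    rw [hassoc, claim1, hVF]
  have claim3 : LinearMap.range ((V * adjoint V : H →L[ℂ] H) : H →ₗ[ℂ] H) ≤ LinearMap.range (E : H →ₗ[ℂ] H) := by
    have key : ∀ y : ↥M, g y ∈ LinearMap.range (E : H →ₗ[ℂ] H) := by
      intro y
      refine h_dense.induction_on y ((aux_isClosed_range hE1).preimage g.continuous) ?_
      rintro ⟨-, ⟨x, rfl⟩⟩
      rw [hge, hf0 x ⟨x, rfl⟩]
      exact ⟨F x, rfl⟩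
    rintro - ⟨x, rfl⟩
    exact key _
  exact ⟨V, claim1, claim2, claim3⟩

end Aux

open ContinuousLinearMap in
/-- If `E, F` are orthogonal projections with `F ∧ (I - E) = 0` (trivial intersection
of ranges), then `F ≼ E` in the sense of Murray–von Neumann: there is a partial
isometry `V` with `V*V = F` and `VV*` a projection with range inside the range of `E`.
In particular, if `E` has finite rank then so does `F`, with `rank F ≤ rank E`. -/
theorem stmt7 {H : Type*} [NormedAddCommGroup H] [InnerProductSpace ℂ H]
    [CompleteSpace H] (E F : H →L[ℂ] H)
    (hE1 : IsIdempotentElem E) (hE2 : IsSelfAdjoint E)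
    (hF1 : IsIdempotentElem F) (hF2 : IsSelfAdjoint F)
    (h : LinearMap.range (F : H →ₗ[ℂ] H) ⊓ LinearMap.range ((1 - E : H →L[ℂ] H) : H →ₗ[ℂ] H) = ⊥) :
    (∃ V : H →L[ℂ] H, adjoint V * V = F ∧ IsIdempotentElem (V * adjoint V) ∧
        LinearMap.range ((V * adjoint V : H →L[ℂ] H) : H →ₗ[ℂ] H) ≤ LinearMap.range (E : H →ₗ[ℂ] H)) ∧
      (FiniteDimensional ℂ ↥(LinearMap.range (E : H →ₗ[ℂ] H)) →
        FiniteDimensional ℂ ↥(LinearMap.range (F : H →ₗ[ℂ] H)) ∧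
          Module.finrank ℂ ↥(LinearMap.range (F : H →ₗ[ℂ] H))
            ≤ Module.finrank ℂ ↥(LinearMap.range (E : H →ₗ[ℂ] H))) := by
  refine ⟨main hE1 hE2 hF1 hF2 h, ?_⟩
  intro hFin
  have hmem : ∀ x ∈ LinearMap.range (F : H →ₗ[ℂ] H), (E : H →ₗ[ℂ] H) x ∈ LinearMap.range (E : H →ₗ[ℂ] H) :=
    fun x _ => ⟨x, rfl⟩
  set r : ↥(LinearMap.range (F : H →ₗ[ℂ] H)) →ₗ[ℂ] ↥(LinearMap.range (E : H →ₗ[ℂ] H)) :=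
    (E : H →ₗ[ℂ] H).restrict hmem with hrdef
  have hinj : Function.Injective r := by
    rw [injective_iff_map_eq_zero]
    intro u hu
    have h0 : E (u : H) = 0 := congrArg Subtype.val hu
    have h1 : (u : H) ∈ LinearMap.range ((1 - E : H →L[ℂ] H) : H →ₗ[ℂ] H) := by
      refine ⟨(u : H), ?_⟩
      simp [ContinuousLinearMap.sub_apply, ContinuousLinearMap.one_apply, h0]
    have h2 : (u : H) ∈ LinearMap.range (F : H →ₗ[ℂ] H) ⊓ LinearMap.range ((1 - E : H →L[ℂ] H) : H →ₗ[ℂ] H) := ⟨u.2, h1⟩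
    rw [h] at h2
    exact Subtype.ext (by simpa using h2)
  haveI hfd := FiniteDimensional.of_injective r hinj
  exact ⟨hfd, LinearMap.finrank_le_finrank_of_injective hinj⟩
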